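/- Let n ≥ 1 be a natural number and λ : Fin n → ℕ (indexed by i = 0, ..., n-1), and set h_i = λ_i + (n - 1) - i, a natural number. Then, as rational numbers, ∑_{σ ∈ Perm(Fin n)} sign(σ) · ∏_{i} T_i(σ) = ( ∏_{i < j} (h_i - h_j) ) / ( ∏_{i} h_i! ), where T_i(σ) = 1/(λ_i + σ(i) - i)! if the integer λ_i + σ(i) - i is nonnegative, and T_i(σ) = 0 otherwise (σ(i) ∈ {0,...,n-1} regarded as an integer). In particular, multiplying through by (∑_i λ_i)! shows that the alternating sum of multinomial coefficients ∑_{σ} sign(σ) · L!/∏_i (λ_i + σ(i) - i)! equals the hook-length formula L!/(∏_i h_i!) · ∏_{i<j}(h_i - h_j), with L = ∑_i λ_i. -/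

import Mathlib

open Finset

/-- Entry identity: the term for `(i, rev l)` equals `(1/(h i)!) * descFactorial (h i) l`. -/
lemma hook_entry_eq (n : ℕ) (hn : 1 ≤ n) (lam : Fin n → ℕ) (h : Fin n → ℕ)
    (hh : ∀ i : Fin n, h i = lam i + (n - 1) - (i : ℕ)) (i l : Fin n) :
    (if 0 ≤ (lam i : ℤ) + ((((Fin.rev l) : Fin n) : ℕ) : ℤ) - ((i : ℕ) : ℤ) then
        (1 : ℚ) / ((((lam i : ℤ) + ((((Fin.rev l) : Fin n) : ℕ) : ℤ) - ((i : ℕ) : ℤ)).toNat.factorial : ℕ) : ℚ)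
        else 0) =
      (((h i).factorial : ℚ))⁻¹ * ((Nat.descFactorial (h i) l : ℕ) : ℚ) := by
  have hi : (i : ℕ) < n := i.isLt
  have hl : (l : ℕ) < n := l.isLt
  have hrev : ((Fin.rev l : Fin n) : ℕ) = n - 1 - (l : ℕ) := by rw [Fin.val_rev]; omega
  have hhi := hh i
  have e1 : (lam i : ℤ) + ((((Fin.rev l) : Fin n) : ℕ) : ℤ) - ((i : ℕ) : ℤ) = (h i : ℤ) - ((l : ℕ) : ℤ) := by
    rw [hrev]; omega
  rw [e1]
  by_cases hc : (l : ℕ) ≤ h i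
  · rw [if_pos (by omega)]
    have ht : ((h i : ℤ) - ((l : ℕ) : ℤ)).toNat = h i - (l : ℕ) := by omega
    rw [ht]
    have hfac : (h i - (l : ℕ)).factorial * Nat.descFactorial (h i) (l : ℕ) = (h i).factorial :=
      Nat.factorial_mul_descFactorial hc
    have h1 : ((h i - (l : ℕ)).factorial : ℚ) ≠ 0 := Nat.cast_ne_zero.mpr (Nat.factorial_ne_zero _)
    have h2 : (((h i).factorial : ℕ) : ℚ) ≠ 0 := Nat.cast_ne_zero.mpr (Nat.factorial_ne_zero _)
    field_simp
    rw [mul_comm]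
    exact_mod_cast (congrArg (Nat.cast : ℕ → ℚ) (hfac.symm.trans (Nat.mul_comm _ _)))
  · rw [if_neg (by omega), Nat.descFactorial_eq_zero_iff_lt.mpr (by omega)]
    simp

set_option maxHeartbeats 1000000 in
/-- For spin 1/2 the counting formula reproduces the hook-length formula:
with hook lengths `h i = λ i + (n-1) - i`,
`∑_σ sign(σ) ∏_i T_i(σ) = (∏_{i<j} (h i - h j)) / (∏_i (h i)!)`,
where `T_i(σ) = 1/(λ i + σ i - i)!` when `λ i + σ i - i ≥ 0` and `0` otherwise. -/
theorem hook_length_from_counting_formula (n : ℕ) (hn : 1 ≤ n) (lam : Fin n → ℕ)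
    (h : Fin n → ℕ) (hh : ∀ i : Fin n, h i = lam i + (n - 1) - (i : ℕ)) :
    ∑ σ : Equiv.Perm (Fin n), ((Equiv.Perm.sign σ : ℤ) : ℚ) *
        ∏ i, (if 0 ≤ (lam i : ℤ) + ((σ i : ℕ) : ℤ) - ((i : ℕ) : ℤ) then
          (1 : ℚ) / ((((lam i : ℤ) + ((σ i : ℕ) : ℤ) - ((i : ℕ) : ℤ)).toNat.factorial : ℕ) : ℚ)
          else 0) =
      ((∏ p ∈ Finset.univ.filter (fun p : Fin n × Fin n => p.1 < p.2),
          ((h p.1 : ℤ) - (h p.2 : ℤ)) : ℤ) : ℚ) /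
        ((∏ i, (h i).factorial : ℕ) : ℚ) := by
  classical
  set E : Fin n → Fin n → ℚ := fun i j =>
    if 0 ≤ (lam i : ℤ) + ((j : ℕ) : ℤ) - ((i : ℕ) : ℤ) then
      (1 : ℚ) / ((((lam i : ℤ) + ((j : ℕ) : ℤ) - ((i : ℕ) : ℤ)).toNat.factorial : ℕ) : ℚ)
    else 0 with hE
  have key : ∀ i l : Fin n, E i (Fin.rev l) =
      (((h i).factorial : ℚ))⁻¹ * ((Nat.descFactorial (h i) l : ℕ) : ℚ) :=
    fun i l => hook_entry_eq n hn lam h hh i l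
  -- sign of conjugated permutation
  have hsign : ∀ τ : Equiv.Perm (Fin n),
      Equiv.Perm.sign (Fin.revPerm * τ * Fin.revPerm) = Equiv.Perm.sign τ := by
    intro τ
    rw [map_mul, map_mul, mul_comm (Equiv.Perm.sign (Fin.revPerm : Equiv.Perm (Fin n)))
      (Equiv.Perm.sign τ), mul_assoc, ← sq, Int.units_sq, mul_one]
  have step1 : ∑ σ : Equiv.Perm (Fin n), ((Equiv.Perm.sign σ : ℤ) : ℚ) * ∏ i, E i (σ i)
      = ∑ τ : Equiv.Perm (Fin n), ((Equiv.Perm.sign τ : ℤ) : ℚ) *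
          ∏ k, E (Fin.rev k) (Fin.rev (τ k)) := by
    refine (Fintype.sum_bijective (fun τ => Fin.revPerm * τ * Fin.revPerm)
      (Function.Involutive.bijective ?_) _ _ ?_).symm
    · intro τ; ext k
      simp [Equiv.Perm.mul_apply, Fin.rev_rev]
    · intro τ
      rw [hsign]
      congr 1
      rw [← Equiv.prod_comp Fin.revPerm
        (fun i => E i ((Fin.revPerm * τ * Fin.revPerm : Equiv.Perm (Fin n)) i))]
      refine Finset.prod_congr rfl fun k _ => ?_
      simp [Equiv.Perm.mul_apply, Fin.rev_rev]
  -- step 2: rewrite each entry and factor the constant out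
  have hCne : (((∏ i, (h i).factorial : ℕ)) : ℚ) ≠ 0 := by
    rw [Nat.cast_prod]
    exact Finset.prod_ne_zero_iff.mpr fun i _ => Nat.cast_ne_zero.mpr (Nat.factorial_ne_zero _)
  have hCrev : ∏ k : Fin n, (((h (Fin.rev k)).factorial : ℚ))⁻¹
      = (((∏ i, (h i).factorial : ℕ)) : ℚ)⁻¹ := by
    rw [Finset.prod_inv_distrib]
    congr 1
    push_cast
    exact Equiv.prod_comp Fin.revPerm (fun i => (((h i).factorial : ℕ) : ℚ))
  have step2 : ∀ τ : Equiv.Perm (Fin n),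
      ∏ k, E (Fin.rev k) (Fin.rev (τ k))
        = (((∏ i, (h i).factorial : ℕ)) : ℚ)⁻¹ *
            ∏ k, ((Nat.descFactorial (h (Fin.rev k)) (τ k) : ℕ) : ℚ) := by
    intro τ
    calc ∏ k, E (Fin.rev k) (Fin.rev (τ k))
        = ∏ k, ((((h (Fin.rev k)).factorial : ℚ))⁻¹ *
            ((Nat.descFactorial (h (Fin.rev k)) (τ k) : ℕ) : ℚ)) := by
          exact Finset.prod_congr rfl fun k _ => key (Fin.rev k) (τ k)
      _ = (∏ k : Fin n, (((h (Fin.rev k)).factorial : ℚ))⁻¹) *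
            ∏ k, ((Nat.descFactorial (h (Fin.rev k)) (τ k) : ℕ) : ℚ) := Finset.prod_mul_distrib
      _ = _ := by rw [hCrev]
  -- step 3: the remaining alternating sum is a determinant
  have step3 : ∑ τ : Equiv.Perm (Fin n), ((Equiv.Perm.sign τ : ℤ) : ℚ) *
        ∏ k, ((Nat.descFactorial (h (Fin.rev k)) (τ k) : ℕ) : ℚ)
      = (Matrix.of fun k l : Fin n => ((Nat.descFactorial (h (Fin.rev k)) l : ℕ) : ℚ)).det := by
    rw [← Matrix.det_transpose, Matrix.det_apply]
    refine Finset.sum_congr rfl fun τ _ => ?_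
    rw [Units.smul_def, zsmul_eq_mul]
    rfl
  -- step 4: evaluate the determinant via Vandermonde
  have step4 : (Matrix.of fun k l : Fin n => ((Nat.descFactorial (h (Fin.rev k)) l : ℕ) : ℚ)).det
      = ∏ i : Fin n, ∏ j ∈ Finset.Ioi i, (((h (Fin.rev j)) : ℚ) - ((h (Fin.rev i)) : ℚ)) := by
    rw [← Matrix.det_vandermonde (fun k : Fin n => ((h (Fin.rev k)) : ℚ))]
    rw [Matrix.det_eval_matrixOfPolynomials_eq_det_vandermonde
      (fun k : Fin n => ((h (Fin.rev k)) : ℚ)) (fun l => descPochhammer ℚ (l : ℕ))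
      (fun l => descPochhammer_natDegree (R := ℚ) (l : ℕ)) (fun l => monic_descPochhammer _ _)]
    congr 1
    ext k l
    simp [descPochhammer_eval_eq_descFactorial]
  -- step 5: identify the pair product
  have pair_eq : ∀ f : Fin n → Fin n → ℚ,
      ∏ p ∈ Finset.univ.filter (fun p : Fin n × Fin n => p.1 < p.2), f p.1 p.2
        = ∏ i : Fin n, ∏ j ∈ Finset.Ioi i, f i j := by
    intro f
    rw [Finset.prod_filter, ← Finset.univ_product_univ, Finset.prod_product]
    refine Finset.prod_congr rfl fun i _ => ?_
    rw [← Finset.prod_filter]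
    congr 1
    ext j; simp
  have step5 : ((∏ p ∈ Finset.univ.filter (fun p : Fin n × Fin n => p.1 < p.2),
        ((h p.1 : ℤ) - (h p.2 : ℤ)) : ℤ) : ℚ)
      = ∏ i : Fin n, ∏ j ∈ Finset.Ioi i, (((h (Fin.rev j)) : ℚ) - ((h (Fin.rev i)) : ℚ)) := by
    rw [← pair_eq (fun i j => ((h (Fin.rev j)) : ℚ) - ((h (Fin.rev i)) : ℚ))]
    push_cast
    refine Finset.prod_nbij' (fun p => (Fin.rev p.2, Fin.rev p.1))
      (fun p => (Fin.rev p.2, Fin.rev p.1)) ?_ ?_ ?_ ?_ ?_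
    · intro p hp
      simp only [Finset.mem_filter, Finset.mem_univ, true_and] at hp ⊢
      exact Fin.rev_lt_rev.mpr hp
    · intro p hp
      simp only [Finset.mem_filter, Finset.mem_univ, true_and] at hp ⊢
      exact Fin.rev_lt_rev.mpr hp
    · intro p _; simp [Fin.rev_rev]
    · intro p _; simp [Fin.rev_rev]
    · intro p _; simp [Fin.rev_rev]
  -- assemble
  calc ∑ σ : Equiv.Perm (Fin n), ((Equiv.Perm.sign σ : ℤ) : ℚ) * ∏ i, E i (σ i)
      = ∑ τ : Equiv.Perm (Fin n), ((Equiv.Perm.sign τ : ℤ) : ℚ) *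
          ((((∏ i, (h i).factorial : ℕ)) : ℚ)⁻¹ *
            ∏ k, ((Nat.descFactorial (h (Fin.rev k)) (τ k) : ℕ) : ℚ)) := by
        rw [step1]; exact Finset.sum_congr rfl fun τ _ => by rw [step2 τ]
    _ = (((∏ i, (h i).factorial : ℕ)) : ℚ)⁻¹ *
          ∑ τ : Equiv.Perm (Fin n), ((Equiv.Perm.sign τ : ℤ) : ℚ) *
            ∏ k, ((Nat.descFactorial (h (Fin.rev k)) (τ k) : ℕ) : ℚ) := by
        rw [Finset.mul_sum]
        exact Finset.sum_congr rfl fun τ _ => by ring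
    _ = (((∏ i, (h i).factorial : ℕ)) : ℚ)⁻¹ *
          ∏ i : Fin n, ∏ j ∈ Finset.Ioi i, (((h (Fin.rev j)) : ℚ) - ((h (Fin.rev i)) : ℚ)) := by
        rw [step3, step4]
    _ = _ := by
        rw [← step5, inv_mul_eq_div]
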